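/- arXiv:0708.4250 — 2 statements merged into one kernel-verified Lean document; each statement's English description precedes it below -/
import Mathlib

section
/- For every positive integer n, Thompson's group T contains an element of order exactly n: there is a piecewise-linear homeomorphism of the circle ℝ/ℤ with all slopes integer powers of 2 and all breakpoints dyadic whose order in the group T is exactly n. -/
open Set

/-- The group of self-homeomorphisms of a topological space,
with `(f * g) x = f (g x)`. -/
instance homeomorphGroup (X : Type*) [TopologicalSpace X] : Group (X ≃ₜ X) where
  mul f g := g.trans f
  one := Homeomorph.refl X
  inv := Homeomorph.symm
  mul_assoc _ _ _ := Homeomorph.ext fun _ => rfl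
  one_mul _ := Homeomorph.ext fun _ => rfl
  mul_one _ := Homeomorph.ext fun _ => rfl
  inv_mul_cancel a := Homeomorph.ext fun x => a.symm_apply_apply x

/-- A real number is a dyadic rational if it has the form `a / 2 ^ b`. -/
def IsDyadic (x : ℝ) : Prop := ∃ a : ℤ, ∃ b : ℕ, x = (a : ℝ) / 2 ^ b

/-- A point of the circle `ℝ/ℤ` is dyadic if it is the image of a dyadic rational. -/
def IsDyadicPt (x : AddCircle (1:ℝ)) : Prop :=
  ∃ r : ℝ, IsDyadic r ∧ (r : AddCircle (1:ℝ)) = x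

/-- `F : ℝ → ℝ` is a lift of the circle map `f` if `F (x+1) = F x + 1` and the
reduction of `F` modulo 1 is `f`. -/
def IsLiftOf (f : AddCircle (1:ℝ) ≃ₜ AddCircle (1:ℝ)) (F : ℝ → ℝ) : Prop :=
  (∀ x : ℝ, F (x + 1) = F x + 1) ∧
  ∀ x : ℝ, f (x : AddCircle (1:ℝ)) = ((F x : ℝ) : AddCircle (1:ℝ))

/-- A self-homeomorphism of the circle `ℝ/ℤ` belongs to Thompson's group `T` iff it maps
the set of dyadic points onto itself and has an increasing lift `F : ℝ → ℝ` that is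
piecewise linear with respect to a finite dyadic partition `0 = t 0 < ⋯ < t m = 1`,
every slope being an integer power of `2` and every breakpoint `(t i, F (t i))`
having dyadic rational coordinates. -/
def InThompsonT (f : AddCircle (1:ℝ) ≃ₜ AddCircle (1:ℝ)) : Prop :=
  (∀ x, IsDyadicPt x ↔ IsDyadicPt (f x)) ∧
  ∃ F : ℝ → ℝ, StrictMono F ∧ IsLiftOf f F ∧
    ∃ m : ℕ, ∃ t : Fin (m + 1) → ℝ,
      StrictMono t ∧ t 0 = 0 ∧ t (Fin.last m) = 1 ∧
      (∀ i, IsDyadic (t i) ∧ IsDyadic (F (t i))) ∧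
      ∀ i : Fin m, ∃ k : ℤ, ∃ c : ℝ,
        ∀ x ∈ Icc (t i.castSucc) (t i.succ), F x = (2 : ℝ) ^ k * x + c

namespace ThompsonAux

noncomputable section

variable (m : ℕ)

def qq : ℝ := 2 ^ m

lemma qq_pos : 0 < qq m := by unfold qq; positivity

lemma one_le_qq : 1 ≤ qq m := one_le_pow₀ (by norm_num)

/-- the half-length of the last interval -/
def vv : ℝ := 1 / (2 * qq m)

lemma vv_pos : 0 < vv m := by unfold vv; have := qq_pos m; positivity

lemma vv_q : 2 * vv m * qq m = 1 := by
  unfold vv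
  rw [mul_one_div, div_mul_eq_mul_div, div_eq_iff (by have := qq_pos m; positivity : (2:ℝ) * qq m ≠ 0)]
  ring

lemma two_vv_le_one : 2 * vv m ≤ 1 := by
  nlinarith [vv_q m, one_le_qq m, vv_pos m]

lemma inv_qq : 1 / qq m = 2 * vv m := by
  unfold vv
  rw [mul_one_div, div_eq_div_iff (qq_pos m).ne' (by have := qq_pos m; positivity : (0:ℝ) < 2 * qq m).ne']
  ring

def GG (t : ℝ) : ℝ := max (max ((1 + t) / 2) (t + vv m)) (qq m * t - qq m + 3 / 2)

lemma GG_strictMono : StrictMono (GG m) := by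
  intro a b hab
  have hq := qq_pos m
  unfold GG
  apply max_lt_max (max_lt_max (by linarith) (by linarith)) (by nlinarith)

lemma GG_eq1 {t : ℝ} (h : t ≤ 1 - 2 * vv m) : GG m t = (1 + t) / 2 := by
  have hq := one_le_qq m
  have hq0 := qq_pos m
  have hv0 := vv_pos m
  have hvq := vv_q m
  have h1 : t + vv m ≤ (1 + t) / 2 := by linarith
  have h2 : qq m * t - qq m + 3 / 2 ≤ (1 + t) / 2 := by
    nlinarith [mul_le_mul_of_nonneg_left h (by linarith : (0:ℝ) ≤ 2 * qq m - 1)]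
  unfold GG
  rw [max_eq_left h1, max_eq_left h2]

lemma GG_eq2 {t : ℝ} (h1 : 1 - 2 * vv m ≤ t) (h2 : t ≤ 1 - vv m) :
    GG m t = t + vv m := by
  have hq := one_le_qq m
  have hq0 := qq_pos m
  have hv0 := vv_pos m
  have hvq := vv_q m
  have e1 : (1 + t) / 2 ≤ t + vv m := by linarith
  have e2 : qq m * t - qq m + 3 / 2 ≤ t + vv m := by
    nlinarith [mul_le_mul_of_nonneg_left h2 (by linarith : (0:ℝ) ≤ qq m - 1)]
  unfold GG
  rw [max_eq_right e1, max_eq_left e2]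

lemma GG_eq3 {t : ℝ} (h1 : 1 - vv m ≤ t) : GG m t = qq m * t - qq m + 3 / 2 := by
  have hq := one_le_qq m
  have hq0 := qq_pos m
  have hv0 := vv_pos m
  have hvq := vv_q m
  have e1 : (1 + t) / 2 ≤ qq m * t - qq m + 3 / 2 := by
    nlinarith [mul_le_mul_of_nonneg_left h1 (by linarith : (0:ℝ) ≤ 2 * qq m - 1)]
  have e2 : t + vv m ≤ qq m * t - qq m + 3 / 2 := by
    nlinarith [mul_le_mul_of_nonneg_left h1 (by linarith : (0:ℝ) ≤ qq m - 1)]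
  unfold GG
  rw [max_eq_right (max_le e1 e2)]

end

end ThompsonAux

namespace ThompsonAux
noncomputable section
variable (m : ℕ)

def FF (x : ℝ) : ℝ := (⌊x⌋ : ℝ) + GG m (Int.fract x)

lemma FF_int (x : ℝ) (j : ℤ) : FF m (x + j) = FF m x + j := by
  unfold FF
  rw [Int.fract_add_intCast, Int.floor_add_intCast]
  push_cast; ring

lemma FF_one (x : ℝ) : FF m (x + 1) = FF m x + 1 := by
  have := FF_int m x 1
  push_cast at this
  simpa using this

lemma FF_eq_GG {t : ℝ} (h0 : 0 ≤ t) (h1 : t < 1) : FF m t = GG m t := by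
  unfold FF
  rw [Int.floor_eq_zero_iff.mpr ⟨h0, h1⟩, Int.fract_eq_self.mpr ⟨h0, h1⟩]
  simp

lemma FF_R1 {t : ℝ} (h0 : 0 ≤ t) (h : t ≤ 1 - 2 * vv m) : FF m t = (1 + t) / 2 := by
  rw [FF_eq_GG m h0 (by have := vv_pos m; linarith), GG_eq1 m h]

lemma FF_R2 {t : ℝ} (h1 : 1 - 2 * vv m ≤ t) (h2 : t ≤ 1 - vv m) : FF m t = t + vv m := by
  have h0 : (0:ℝ) ≤ t := le_trans (by have := two_vv_le_one m; linarith) h1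
  rw [FF_eq_GG m h0 (by have := vv_pos m; linarith), GG_eq2 m h1 h2]

lemma FF_R3 {t : ℝ} (h1 : 1 - vv m ≤ t) (h2 : t ≤ 1) :
    FF m t = qq m * t - qq m + 3 / 2 := by
  rcases eq_or_lt_of_le h2 with rfl | h2'
  · have : FF m 1 = FF m 0 + 1 := by simpa using FF_one m 0
    rw [this, FF_eq_GG m le_rfl one_pos, GG_eq1 m (by have := two_vv_le_one m; linarith)]
    ring_nf
  · have h0 : (0:ℝ) ≤ t :=
      le_trans (by have := vv_pos m; have := two_vv_le_one m; linarith) h1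
    rw [FF_eq_GG m h0 h2', GG_eq3 m h1]

lemma GG_lb {t : ℝ} (h0 : 0 ≤ t) : 1 / 2 ≤ GG m t :=
  le_trans (by linarith) (le_trans (le_max_left _ _) (le_max_left _ _))

lemma GG_onehalf : GG m 1 = 3 / 2 := by
  have := GG_eq3 m (t := 1) (by have := vv_pos m; linarith)
  rw [this]; ring

lemma GG_ub {t : ℝ} (h1 : t < 1) : GG m t < 3 / 2 := by
  rw [← GG_onehalf m]
  exact GG_strictMono m h1

lemma FF_strictMono : StrictMono (FF m) := by
  intro x y hxy
  rcases eq_or_lt_of_le (Int.floor_le_floor hxy.le) with hf | hf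
  · unfold FF
    rw [← hf]
    have : Int.fract x < Int.fract y := by
      unfold Int.fract; rw [← hf]; linarith
    have := GG_strictMono m this
    linarith
  · have hx : FF m x < (⌊x⌋ : ℝ) + 3 / 2 := by
      unfold FF
      have := GG_ub m (Int.fract_lt_one x)
      linarith
    have hy : (⌊y⌋ : ℝ) + 1 / 2 ≤ FF m y := by
      unfold FF
      have := GG_lb m (Int.fract_nonneg y)
      linarith
    have : (⌊x⌋ : ℝ) + 1 ≤ (⌊y⌋ : ℝ) := by exact_mod_cast Int.add_one_le_of_lt hf
    linarith

lemma FF_surj : Function.Surjective (FF m) := by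
  intro y
  have hq := one_le_qq m
  have hq0 := qq_pos m
  have hv0 := vv_pos m
  have hvq := vv_q m
  have h2v := two_vv_le_one m
  set k : ℤ := ⌊y - 1/2⌋ with hk
  have hk1 : (k : ℝ) ≤ y - 1/2 := Int.floor_le _
  have hk2 : y - 1/2 < k + 1 := Int.lt_floor_add_one _
  set y' : ℝ := y - k with hy'
  have hy1 : 1/2 ≤ y' := by simp only [hy']; linarith
  have hy2 : y' < 3/2 := by simp only [hy']; linarith
  have key : ∃ t, 0 ≤ t ∧ t < 1 ∧ FF m t = y' := by
    rcases le_or_gt y' (1 - vv m) with hc1 | hc1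
    · refine ⟨2 * y' - 1, by linarith, by linarith, ?_⟩
      rw [FF_R1 m (by linarith) (by linarith)]
      ring
    · rcases le_or_gt y' 1 with hc2 | hc2
      · refine ⟨y' - vv m, by linarith, by linarith, ?_⟩
        rw [FF_R2 m (by linarith) (by linarith)]
        ring
      · have hd1 : -vv m ≤ (y' - 3/2) / qq m := by
          rw [le_div_iff₀ hq0]; nlinarith
        have hd2 : (y' - 3/2) / qq m < 0 := div_neg_of_neg_of_pos (by linarith) hq0
        refine ⟨(y' - 3/2) / qq m + 1, by linarith, by linarith, ?_⟩
        rw [FF_R3 m (by linarith) (by linarith), mul_add, mul_div_cancel₀ _ hq0.ne']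
        ring
  obtain ⟨t, ht0, ht1, htF⟩ := key
  exact ⟨t + k, by rw [FF_int m t k, htF]; simp [hy']⟩

end
end ThompsonAux

namespace ThompsonAux
noncomputable section
variable (m : ℕ)

def Fo : ℝ ≃o ℝ := StrictMono.orderIsoOfSurjective (FF m) (FF_strictMono m) (FF_surj m)

lemma Fo_apply (x : ℝ) : Fo m x = FF m x := rfl

lemma Fo_symm_int (y : ℝ) (j : ℤ) : (Fo m).symm (y + j) = (Fo m).symm y + j := by
  apply (Fo m).injective
  rw [OrderIso.apply_symm_apply, Fo_apply, FF_int, ← Fo_apply, OrderIso.apply_symm_apply]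

lemma relF : Relator.LiftFun (QuotientAddGroup.leftRel (AddSubgroup.zmultiples (1:ℝ))).r
    (QuotientAddGroup.leftRel (AddSubgroup.zmultiples (1:ℝ))).r (FF m) (FF m) := by
  intro x y h
  have h' := QuotientAddGroup.leftRel_apply.mp h
  refine QuotientAddGroup.leftRel_apply.mpr ?_
  rw [AddSubgroup.mem_zmultiples_iff] at h' ⊢
  obtain ⟨j, hj⟩ := h'
  rw [zsmul_eq_mul, mul_one] at hj
  have hy : y = x + j := by linarith
  exact ⟨j, by rw [zsmul_eq_mul, mul_one, hy, FF_int]; ring⟩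

lemma relFsymm : Relator.LiftFun (QuotientAddGroup.leftRel (AddSubgroup.zmultiples (1:ℝ))).r
    (QuotientAddGroup.leftRel (AddSubgroup.zmultiples (1:ℝ))).r ⇑(Fo m).symm ⇑(Fo m).symm := by
  intro x y h
  have h' := QuotientAddGroup.leftRel_apply.mp h
  refine QuotientAddGroup.leftRel_apply.mpr ?_
  rw [AddSubgroup.mem_zmultiples_iff] at h' ⊢
  obtain ⟨j, hj⟩ := h'
  rw [zsmul_eq_mul, mul_one] at hj
  have hy : y = x + j := by linarith
  exact ⟨j, by rw [zsmul_eq_mul, mul_one, hy, Fo_symm_int]; ring⟩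

lemma FF_continuous : Continuous (FF m) := (Fo m).continuous

def Tfun : AddCircle (1:ℝ) → AddCircle (1:ℝ) := Quotient.map' (FF m) (relF m)

def Tinv : AddCircle (1:ℝ) → AddCircle (1:ℝ) := Quotient.map' ⇑(Fo m).symm (relFsymm m)

lemma Tfun_coe (x : ℝ) : Tfun m (x : AddCircle (1:ℝ)) = ((FF m x : ℝ) : AddCircle (1:ℝ)) := rfl

lemma Tinv_coe (x : ℝ) :
    Tinv m (x : AddCircle (1:ℝ)) = (((Fo m).symm x : ℝ) : AddCircle (1:ℝ)) := rfl

def TC : AddCircle (1:ℝ) ≃ₜ AddCircle (1:ℝ) where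
  toFun := Tfun m
  invFun := Tinv m
  left_inv z := by
    induction z using QuotientAddGroup.induction_on with
    | H x =>
      rw [Tfun_coe, Tinv_coe]
      congr 1
      rw [← Fo_apply, OrderIso.symm_apply_apply]
  right_inv z := by
    induction z using QuotientAddGroup.induction_on with
    | H x =>
      rw [Tinv_coe, Tfun_coe]
      congr 1
      rw [← Fo_apply, OrderIso.apply_symm_apply]
  continuous_toFun := Continuous.quotient_map' (FF_continuous m) (relF m)
  continuous_invFun := Continuous.quotient_map' (Fo m).symm.continuous (relFsymm m)

lemma TC_apply (x : ℝ) : TC m (x : AddCircle (1:ℝ)) = ((FF m x : ℝ) : AddCircle (1:ℝ)) := rfl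

lemma TC_symm_apply (x : ℝ) :
    (TC m).symm (x : AddCircle (1:ℝ)) = (((Fo m).symm x : ℝ) : AddCircle (1:ℝ)) := rfl

end
end ThompsonAux

namespace ThompsonAux
noncomputable section
variable (m : ℕ)

lemma FF_iter_int (k : ℕ) (x : ℝ) (j : ℤ) :
    (FF m)^[k] (x + j) = (FF m)^[k] x + j := by
  induction k generalizing x with
  | zero => simp
  | succ k ih =>
    rw [Function.iterate_succ_apply, Function.iterate_succ_apply, FF_int, ih]

lemma half_pow : (1/2 : ℝ) ^ m = 2 * vv m := by
  rw [← inv_qq]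
  unfold qq
  rw [div_pow, one_pow]

lemma step1 {k : ℕ} (hk : k ≤ m) {x : ℝ} (hx0 : 0 ≤ x) (hx1 : x ≤ 1/2) :
    (FF m)^[k] x = 1 - (1 - x) * (1/2) ^ k := by
  induction k with
  | zero => simp
  | succ k ih =>
    have hk' : k ≤ m := Nat.le_of_succ_le hk
    have hB : (0:ℝ) < (1/2) ^ k := by positivity
    have hBm : (1/2 : ℝ) ^ m ≤ (1/2) ^ k := by
      apply pow_le_pow_of_le_one (by norm_num) (by norm_num) hk'
    have hBm' : (1/2 : ℝ) ^ m ≤ (1/2) ^ k / 2 := by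
      calc (1/2 : ℝ) ^ m ≤ (1/2) ^ (k+1) :=
            pow_le_pow_of_le_one (by norm_num) (by norm_num) hk
        _ = (1/2) ^ k / 2 := by rw [pow_succ]; ring
    have hv := half_pow m
    have hB1 : (1/2:ℝ) ^ k ≤ 1 := pow_le_one₀ (by norm_num) (by norm_num)
    rw [Function.iterate_succ_apply', ih hk']
    have hw0 : (0:ℝ) ≤ 1 - (1 - x) * (1/2) ^ k := by nlinarith
    have hw1 : 1 - (1 - x) * (1/2) ^ k ≤ 1 - 2 * vv m := by nlinarith
    rw [FF_R1 m hw0 hw1, pow_succ]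
    ring

lemma step2 {x : ℝ} (hx0 : 0 ≤ x) (hx1 : x ≤ 1/2) :
    (FF m)^[m+1] x = 1 - (1 - x) * (2 * vv m) + vv m := by
  have hv0 := vv_pos m
  rw [Function.iterate_succ_apply', step1 m le_rfl hx0 hx1, half_pow]
  have hw1 : 1 - 2 * vv m ≤ 1 - (1 - x) * (2 * vv m) := by nlinarith
  have hw2 : 1 - (1 - x) * (2 * vv m) ≤ 1 - vv m := by nlinarith
  rw [FF_R2 m hw1 hw2]

lemma step3 {x : ℝ} (hx0 : 0 ≤ x) (hx1 : x ≤ 1/2) :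
    (FF m)^[m+2] x = x + 1 := by
  have hv0 := vv_pos m
  have hvq := vv_q m
  have hq0 := qq_pos m
  have : (m + 2) = (m + 1) + 1 := rfl
  rw [this, Function.iterate_succ_apply', step2 m hx0 hx1]
  have hw1 : 1 - vv m ≤ 1 - (1 - x) * (2 * vv m) + vv m := by nlinarith
  have hw2 : 1 - (1 - x) * (2 * vv m) + vv m ≤ 1 := by nlinarith
  rw [FF_R3 m hw1 hw2]
  linear_combination (x - 1/2) * hvq

lemma key2 {y : ℝ} (hy0 : 0 ≤ y) (hy1 : y ≤ 1) : (FF m)^[m+2] y = y + 1 := by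
  classical
  have hv0 := vv_pos m
  have hvq := vv_q m
  have hq0 := qq_pos m
  have h2v := two_vv_le_one m
  rcases le_or_gt y (1/2) with hc | hc
  · exact step3 m hy0 hc
  rcases le_or_gt (1 - vv m) y with hc2 | hc2
  · -- top piece
    set x : ℝ := 1/2 - qq m * (1 - y) with hx
    have hqv : qq m * vv m = 1/2 := by linarith [hvq]
    have hx0 : 0 ≤ x := by
      have : qq m * (1 - y) ≤ qq m * vv m :=
        mul_le_mul_of_nonneg_left (by linarith) hq0.le
      simp only [hx]; linarith
    have hx1 : x ≤ 1/2 := by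
      have : 0 ≤ qq m * (1 - y) := mul_nonneg hq0.le (by linarith)
      simp only [hx]; linarith
    have hFx : (FF m)^[m+1] x = y := by
      rw [step2 m hx0 hx1, hx]
      linear_combination (y - 1) * hvq
    have := step3 m hx0 hx1
    calc (FF m)^[m+2] y = (FF m)^[m+2] ((FF m)^[m+1] x) := by rw [hFx]
      _ = (FF m)^[m+1] ((FF m)^[m+2] x) := by
          rw [← Function.iterate_add_apply, ← Function.iterate_add_apply, Nat.add_comm]
      _ = (FF m)^[m+1] (x + 1) := by rw [this]
      _ = (FF m)^[m+1] x + 1 := by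
          have := FF_iter_int m (m+1) x 1
          push_cast at this
          simpa using this
      _ = y + 1 := by rw [hFx]
  · -- middle piece
    set P : ℕ → Prop := fun k => 1 - y ≤ (1/2) ^ k with hP
    have hP0 : P 0 := by simp [hP]; linarith
    set k : ℕ := Nat.findGreatest P m with hkdef
    have hkm : k ≤ m := Nat.findGreatest_le m
    have hPk : P k := Nat.findGreatest_spec (Nat.zero_le m) hP0
    have hup : (1/2:ℝ) ^ (k+1) ≤ 1 - y := by
      rcases lt_or_ge k m with hlt | hge
      · have hnp : ¬ P (k+1) :=
          Nat.findGreatest_is_greatest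
            (show Nat.findGreatest P m < k + 1 by rw [← hkdef]; exact Nat.lt_succ_self k)
            hlt
        simp only [hP] at hnp
        linarith [lt_of_not_ge hnp]
      · have hkm' : k = m := le_antisymm hkm hge
        rw [hkm', pow_succ, half_pow]
        nlinarith
    set B : ℝ := (2:ℝ) ^ k with hBdef
    have hB0 : (0:ℝ) < B := by positivity
    have hB : (1/2:ℝ) ^ k * B = 1 := by
      rw [hBdef, ← mul_pow]; norm_num
    set x : ℝ := 1 - (1 - y) * B with hx
    have hx0 : 0 ≤ x := by
      have := mul_le_mul_of_nonneg_right hPk hB0.le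
      simp only [hx]; nlinarith
    have hx1 : x ≤ 1/2 := by
      have := mul_le_mul_of_nonneg_right hup hB0.le
      have hpk1 : (1/2:ℝ) ^ (k+1) * B = 1/2 := by
        rw [pow_succ]; nlinarith [hB]
      simp only [hx]; nlinarith
    have hFx : (FF m)^[k] x = y := by
      rw [step1 m hkm hx0 hx1, hx]
      have : (1 - (1 - (1 - y) * B)) * (1/2)^k = 1 - y := by
        nlinarith [hB]
      rw [this]; ring
    have hs3 := step3 m hx0 hx1
    calc (FF m)^[m+2] y = (FF m)^[m+2] ((FF m)^[k] x) := by rw [hFx]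
      _ = (FF m)^[k] ((FF m)^[m+2] x) := by
          rw [← Function.iterate_add_apply, ← Function.iterate_add_apply, Nat.add_comm]
      _ = (FF m)^[k] (x + 1) := by rw [hs3]
      _ = (FF m)^[k] x + 1 := by
          have := FF_iter_int m k x 1
          push_cast at this
          simpa using this
      _ = y + 1 := by rw [hFx]

lemma key3 (z : ℝ) : (FF m)^[m+2] z = z + 1 := by
  have h1 : z = Int.fract z + (⌊z⌋ : ℤ) := by rw [Int.fract]; push_cast; ring
  calc (FF m)^[m+2] z = (FF m)^[m+2] (Int.fract z + (⌊z⌋ : ℤ)) := by rw [← h1]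
    _ = (FF m)^[m+2] (Int.fract z) + (⌊z⌋ : ℤ) := FF_iter_int m _ _ _
    _ = Int.fract z + 1 + (⌊z⌋ : ℤ) :=
        by rw [key2 m (Int.fract_nonneg z) (Int.fract_lt_one z).le]
    _ = z + 1 := by rw [Int.fract]; push_cast; ring

lemma FF_iter_zero {k : ℕ} (hk : k ≤ m + 1) : (FF m)^[k] 0 = 1 - (1/2) ^ k := by
  rcases Nat.lt_or_ge k (m+1) with hlt | hge
  · rw [step1 m (by omega) le_rfl (by norm_num)]; ring
  · have hk' : k = m + 1 := le_antisymm hk hge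
    rw [hk', step2 m le_rfl (by norm_num), pow_succ, half_pow]
    ring

end
end ThompsonAux

namespace ThompsonAux
noncomputable section
variable (m : ℕ)

lemma hom_mul_apply {X : Type*} [TopologicalSpace X] (f g : X ≃ₜ X) (x : X) :
    (f * g) x = f (g x) := rfl

lemma hom_one_apply {X : Type*} [TopologicalSpace X] (x : X) :
    (1 : X ≃ₜ X) x = x := rfl

lemma TC_pow (k : ℕ) (x : ℝ) :
    (TC m ^ k) (x : AddCircle (1:ℝ)) = (((FF m)^[k] x : ℝ) : AddCircle (1:ℝ)) := by
  induction k with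
  | zero => rw [pow_zero]; rfl
  | succ k ih =>
    rw [pow_succ', hom_mul_apply, ih, TC_apply, Function.iterate_succ_apply']

lemma TC_order : orderOf (TC m) = m + 2 := by
  rw [orderOf_eq_iff (by omega)]
  constructor
  · apply Homeomorph.ext
    intro z
    induction z using QuotientAddGroup.induction_on with
    | H x =>
      rw [TC_pow, key3, hom_one_apply]
      exact AddCircle.coe_add_period 1 x
  · intro k hk hk0 heq
    have h1 : (TC m ^ k) ((0:ℝ) : AddCircle (1:ℝ)) = ((0:ℝ) : AddCircle (1:ℝ)) := by
      rw [heq, hom_one_apply]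
    rw [TC_pow, FF_iter_zero m (by omega)] at h1
    have h2 : ((1 - (1/2:ℝ)^k : ℝ) : AddCircle (1:ℝ)) = 0 := h1
    rw [AddCircle.coe_eq_zero_iff] at h2
    obtain ⟨j, hj⟩ := h2
    rw [zsmul_eq_mul, mul_one] at hj
    have hp1 : (1/2:ℝ)^k < 1 := pow_lt_one₀ (by norm_num) (by norm_num) (by omega)
    have hp0 : (0:ℝ) < (1/2)^k := by positivity
    have c0 : (0:ℝ) < j := by rw [hj]; linarith
    have c1 : (j:ℝ) < 1 := by rw [hj]; linarith
    have d0 : 0 < j := by exact_mod_cast c0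
    have d1 : j < 1 := by exact_mod_cast c1
    omega

end
end ThompsonAux

namespace ThompsonAux
noncomputable section
variable (m : ℕ)

lemma dy_add {x y : ℝ} (hx : IsDyadic x) (hy : IsDyadic y) : IsDyadic (x + y) := by
  obtain ⟨a, b, rfl⟩ := hx
  obtain ⟨a', b', rfl⟩ := hy
  refine ⟨a * 2 ^ b' + a' * 2 ^ b, b + b', ?_⟩
  push_cast [pow_add]
  rw [div_add_div _ _ (pow_ne_zero b (two_ne_zero : (2:ℝ) ≠ 0))
    (pow_ne_zero b' (two_ne_zero : (2:ℝ) ≠ 0))]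
  ring

lemma dy_neg {x : ℝ} (hx : IsDyadic x) : IsDyadic (-x) := by
  obtain ⟨a, b, rfl⟩ := hx
  exact ⟨-a, b, by push_cast; ring⟩

lemma dy_int (j : ℤ) : IsDyadic (j : ℝ) := ⟨j, 0, by norm_num⟩

lemma dy_half {x : ℝ} (hx : IsDyadic x) : IsDyadic (x / 2) := by
  obtain ⟨a, b, rfl⟩ := hx
  exact ⟨a, b + 1, by rw [pow_succ]; push_cast; field_simp⟩

lemma dy_two_mul {x : ℝ} (hx : IsDyadic x) : IsDyadic (2 * x) := by
  obtain ⟨a, b, rfl⟩ := hx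
  exact ⟨2 * a, b, by push_cast; ring⟩

lemma dy_mul_pow {x : ℝ} (k : ℕ) (hx : IsDyadic x) : IsDyadic ((2:ℝ) ^ k * x) := by
  obtain ⟨a, b, rfl⟩ := hx
  exact ⟨2 ^ k * a, b, by push_cast; ring⟩

lemma dy_div_pow {x : ℝ} (k : ℕ) (hx : IsDyadic x) : IsDyadic (x / (2:ℝ) ^ k) := by
  obtain ⟨a, b, rfl⟩ := hx
  exact ⟨a, b + k, by rw [pow_add]; push_cast; field_simp⟩

lemma dy_qq : IsDyadic (qq m) := ⟨2 ^ m, 0, by unfold qq; push_cast; norm_num⟩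

lemma dy_vv : IsDyadic (vv m) := by
  refine ⟨1, m + 1, ?_⟩
  unfold vv qq
  rw [pow_succ]
  push_cast
  ring

lemma dy_sub {x y : ℝ} (hx : IsDyadic x) (hy : IsDyadic y) : IsDyadic (x - y) := by
  rw [sub_eq_add_neg]; exact dy_add hx (dy_neg hy)

lemma dy_GG {t : ℝ} (ht : IsDyadic t) : IsDyadic (GG m t) := by
  have l1 : IsDyadic ((1 + t) / 2) := dy_half (dy_add ⟨1, 0, by norm_num⟩ ht)
  have l2 : IsDyadic (t + vv m) := dy_add ht (dy_vv m)
  have l3 : IsDyadic (qq m * t - qq m + 3 / 2) := by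
    have h1 : IsDyadic (qq m * t) := by
      have := dy_mul_pow m ht
      unfold qq
      exact this
    exact dy_add (dy_sub h1 (dy_qq m)) ⟨3, 1, by norm_num⟩
  unfold GG
  rcases max_choice ((1 + t) / 2) (t + vv m) with h | h <;>
    rcases max_choice (max ((1 + t) / 2) (t + vv m)) (qq m * t - qq m + 3 / 2) with h2 | h2 <;>
      rw [h2] <;> first | assumption | (rw [h]; assumption)


end
end ThompsonAux

namespace ThompsonAux
noncomputable section
variable (m : ℕ)

lemma dy_fract {x : ℝ} (hx : IsDyadic x) : IsDyadic (Int.fract x) := by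
  rw [Int.fract]
  exact dy_sub hx (dy_int ⌊x⌋)

lemma dy_FF {x : ℝ} (hx : IsDyadic x) : IsDyadic (FF m x) := by
  unfold FF
  exact dy_add (dy_int ⌊x⌋) (dy_GG m (dy_fract hx))

lemma dy_FFsymm {y : ℝ} (hy : IsDyadic y) : IsDyadic ((Fo m).symm y) := by
  set x : ℝ := (Fo m).symm y with hxdef
  have hFxy : FF m x = y := by
    rw [← Fo_apply, hxdef, OrderIso.apply_symm_apply]
  set t : ℝ := Int.fract x with htdef
  have ht0 : 0 ≤ t := Int.fract_nonneg x
  have ht1 : t < 1 := Int.fract_lt_one x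
  have hGG : GG m t = y - (⌊x⌋ : ℤ) := by
    unfold FF at hFxy
    rw [← htdef] at hFxy
    linarith
  have hyi : IsDyadic (y - (⌊x⌋ : ℤ)) := dy_sub hy (dy_int _)
  have hdyt : IsDyadic t := by
    rcases le_or_gt t (1 - 2 * vv m) with hr | hr
    · have := GG_eq1 m hr
      rw [this] at hGG
      have ht : t = 2 * (y - (⌊x⌋ : ℤ)) - 1 := by linarith
      rw [ht]
      exact dy_sub (dy_two_mul hyi) ⟨1, 0, by norm_num⟩
    rcases le_or_gt t (1 - vv m) with hr2 | hr2
    · have := GG_eq2 m hr.le hr2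
      rw [this] at hGG
      have ht : t = (y - (⌊x⌋ : ℤ)) - vv m := by linarith
      rw [ht]
      exact dy_sub hyi (dy_vv m)
    · have := GG_eq3 m hr2.le
      rw [this] at hGG
      have hq0 := qq_pos m
      have ht : t = ((y - (⌊x⌋ : ℤ)) - 3/2 + qq m) / qq m := by
        rw [eq_div_iff hq0.ne']
        nlinarith
      rw [ht]
      have : IsDyadic ((y - (⌊x⌋ : ℤ)) - 3/2 + qq m) :=
        dy_add (dy_sub hyi ⟨3, 1, by norm_num⟩) (dy_qq m)
      unfold qq
      exact dy_div_pow m this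
  have hxx : x = t + (⌊x⌋ : ℤ) := by
    rw [htdef, Int.fract]; push_cast; ring
  rw [hxx]
  exact dy_add hdyt (dy_int _)

lemma TC_dyadic (x : AddCircle (1:ℝ)) : IsDyadicPt x ↔ IsDyadicPt (TC m x) := by
  constructor
  · rintro ⟨r, hr, rfl⟩
    exact ⟨FF m r, dy_FF m hr, (TC_apply m r).symm⟩
  · rintro ⟨s, hs, hsx⟩
    have : x = (TC m).symm ((TC m) x) := ((TC m).symm_apply_apply x).symm
    rw [this, ← hsx, TC_symm_apply]
    exact ⟨(Fo m).symm s, dy_FFsymm m hs, rfl⟩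

end
end ThompsonAux

namespace ThompsonAux
noncomputable section
variable (m : ℕ)

lemma strictMono_vec4 {a b c d : ℝ} (h1 : a < b) (h2 : b < c) (h3 : c < d) :
    StrictMono ![a, b, c, d] := by
  intro i j hij
  fin_cases i <;> fin_cases j <;>
    simp_all <;> linarith

lemma inT : InThompsonT (TC m) := by
  refine ⟨TC_dyadic m, FF m, FF_strictMono m, ⟨FF_one m, fun x => TC_apply m x⟩, ?_⟩
  have hv0 := vv_pos m
  have h2v := two_vv_le_one m
  rcases Nat.eq_zero_or_pos m with hm | hm
  · -- m = 0 : rotation by a half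
    subst hm
    have hv : vv 0 = 1/2 := by unfold vv qq; norm_num
    have hq : qq 0 = 1 := by unfold qq; norm_num
    refine ⟨3, ![0, 1/2, 3/4, 1],
      strictMono_vec4 (by norm_num) (by norm_num) (by norm_num), ?_, ?_, ?_, ?_⟩
    · rfl
    · rfl
    · intro i
      have hd : ∀ r ∈ ({0, 1/2, 3/4, 1} : Set ℝ), IsDyadic r := by
        rintro r (rfl | rfl | rfl | rfl)
        · exact ⟨0, 0, by norm_num⟩
        · exact ⟨1, 1, by norm_num⟩
        · exact ⟨3, 2, by norm_num⟩
        · exact ⟨1, 0, by norm_num⟩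
      have hdi : IsDyadic (![0, 1/2, 3/4, 1] i) := by
        fin_cases i <;> [skip; skip; skip; skip] <;>
          refine hd _ (by simp)
      exact ⟨hdi, dy_FF 0 hdi⟩
    · intro i
      fin_cases i
      · refine ⟨0, 1/2, fun x hx => ?_⟩
        simp only [Fin.castSucc, Fin.succ] at hx
        have hx1 : (0:ℝ) ≤ x := by simpa using hx.1
        have hx2 : x ≤ 1/2 := by simpa using hx.2
        rw [FF_R2 0 (by rw [hv]; norm_num; linarith) (by rw [hv]; linarith), hv]
        norm_num
      · refine ⟨0, 1/2, fun x hx => ?_⟩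
        have hx1 : (1:ℝ)/2 ≤ x := by simpa using hx.1
        have hx2 : x ≤ 3/4 := by simpa using hx.2
        rw [FF_R3 0 (by rw [hv]; linarith) (by linarith), hq]
        norm_num; ring
      · refine ⟨0, 1/2, fun x hx => ?_⟩
        have hx1 : (3:ℝ)/4 ≤ x := by simpa using hx.1
        have hx2 : x ≤ 1 := by simpa using hx.2
        rw [FF_R3 0 (by rw [hv]; linarith) (by linarith), hq]
        norm_num; ring
  · -- m ≥ 1
    have hvs : 2 * vv m ≤ 1/2 := by
      have : (1/2:ℝ)^m ≤ (1/2)^1 :=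
        pow_le_pow_of_le_one (by norm_num) (by norm_num) hm
      rw [half_pow m] at this
      simpa using this
    refine ⟨3, ![0, 1 - 2 * vv m, 1 - vv m, 1],
      strictMono_vec4 (by linarith) (by linarith) (by linarith), ?_, ?_, ?_, ?_⟩
    · rfl
    · rfl
    · intro i
      have hdi : IsDyadic (![0, 1 - 2 * vv m, 1 - vv m, 1] i) := by
        fin_cases i
        · exact ⟨0, 0, by norm_num⟩
        · exact dy_sub ⟨1, 0, by norm_num⟩ (dy_two_mul (dy_vv m))
        · exact dy_sub ⟨1, 0, by norm_num⟩ (dy_vv m)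
        · exact ⟨1, 0, by norm_num⟩
      exact ⟨hdi, dy_FF m hdi⟩
    · intro i
      fin_cases i
      · refine ⟨-1, 1/2, fun x hx => ?_⟩
        have hx1 : (0:ℝ) ≤ x := by simpa using hx.1
        have hx2 : x ≤ 1 - 2 * vv m := by simpa using hx.2
        rw [FF_R1 m hx1 hx2]
        rw [show ((2:ℝ)^(-1:ℤ)) = 1/2 by norm_num]
        ring
      · refine ⟨0, vv m, fun x hx => ?_⟩
        have hx1 : 1 - 2 * vv m ≤ x := by simpa using hx.1
        have hx2 : x ≤ 1 - vv m := by simpa using hx.2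
        rw [FF_R2 m hx1 hx2, zpow_zero]
        ring
      · refine ⟨(m:ℤ), 3/2 - qq m, fun x hx => ?_⟩
        have hx1 : 1 - vv m ≤ x := hx.1
        have hx2 : x ≤ 1 := by simpa using hx.2
        rw [FF_R3 m hx1 hx2, zpow_natCast]
        show _ = qq m * x + _
        ring

lemma inT_one : InThompsonT (1 : AddCircle (1:ℝ) ≃ₜ AddCircle (1:ℝ)) := by
  refine ⟨fun x => Iff.rfl, id, strictMono_id, ⟨fun x => rfl, fun x => rfl⟩,
    1, ![0, 1], ?_, rfl, rfl, ?_, ?_⟩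
  · intro i j hij
    fin_cases i <;> fin_cases j <;> simp_all <;> norm_num
  · intro i
    fin_cases i
    · exact ⟨⟨0, 0, by norm_num⟩, ⟨0, 0, by norm_num⟩⟩
    · exact ⟨⟨1, 0, by norm_num⟩, ⟨1, 0, by norm_num⟩⟩
  · intro i
    refine ⟨0, 0, fun x hx => ?_⟩
    simp [zpow_zero]

end
end ThompsonAux


/-- For every positive integer `n`, Thompson's group `T` contains an element of order
exactly `n`: a piecewise-linear homeomorphism of the circle `ℝ/ℤ` with all slopes
integer powers of `2` and all breakpoints dyadic whose order is exactly `n`. -/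
theorem thompsonT_element_of_order :
    ∀ n : ℕ, 0 < n →
      ∃ f : AddCircle (1:ℝ) ≃ₜ AddCircle (1:ℝ), InThompsonT f ∧ orderOf f = n := by
  intro n hn
  rcases n with _ | _ | m
  · omega
  · exact ⟨1, ThompsonAux.inT_one, orderOf_one⟩
  · exact ⟨ThompsonAux.TC m, ThompsonAux.inT m, ThompsonAux.TC_order m⟩
end

section
/- For every positive integer n there exists an element c of Thompson's group T of order exactly n such that for every integer k with 1 ≤ k < n, the rotation number of c^k equals k/n (mod 1). -/
open Set

open Function

namespace TT

/-- base piece map: max of three affine maps (convex PL function on [0,1]) -/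
noncomputable def g0 (p : ℕ) (y : ℝ) : ℝ :=
  max ((y + 1) / 2) (max (y + 1 / 2 ^ (p + 1)) (2 ^ p * (y - 1) + 3 / 2))

/-- the lift of the order-(p+2) element of Thompson's T -/
noncomputable def G (p : ℕ) (x : ℝ) : ℝ := g0 p (Int.fract x) + ⌊x⌋

variable {p : ℕ}

lemma two_pow_pos : (0:ℝ) < 2 ^ p := by positivity

lemma one_le_two_pow : (1:ℝ) ≤ 2 ^ p := one_le_pow₀ (by norm_num)

lemma upos : (0:ℝ) < 1 / 2 ^ p := by positivity

lemma ule1 : (1:ℝ) / 2 ^ p ≤ 1 := by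
  rw [div_le_one two_pow_pos]; exact one_le_two_pow

lemma Eu : (2:ℝ) ^ p * (1 / 2 ^ p) = 1 := by
  field_simp

lemma usucc : (1:ℝ) / 2 ^ (p+1) = (1 / 2 ^ p) / 2 := by
  rw [pow_succ, div_div]

lemma g0_strictMono : StrictMono (g0 p) := by
  intro a b h
  have h1 : (a + 1) / 2 < (b + 1) / 2 := by linarith
  have h2 : a + 1 / 2 ^ (p+1) < b + 1 / 2 ^ (p+1) := by linarith
  have h3 : 2 ^ p * (a - 1) + 3 / 2 < 2 ^ p * (b - 1) + 3 / 2 := by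
    nlinarith [two_pow_pos (p := p)]
  exact max_lt_max h1 (max_lt_max h2 h3)

lemma gL1 {y : ℝ} (hy : y ≤ 1 - 1 / 2 ^ p) : g0 p y = (y + 1) / 2 := by
  set u : ℝ := 1 / 2 ^ p with hu
  have e1 : (1:ℝ) ≤ 2 ^ p := one_le_two_pow
  have hu0 : 0 < u := upos
  have hu1 : u ≤ 1 := ule1
  have hEu : (2:ℝ) ^ p * u = 1 := Eu
  have h1y : u ≤ 1 - y := by linarith
  have hB : y + 1 / 2 ^ (p+1) ≤ (y + 1) / 2 := by
    rw [usucc, ← hu]; linarith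
  have hC : 2 ^ p * (y - 1) + 3 / 2 ≤ (y + 1) / 2 := by
    have key : u * ((2:ℝ)^p - 1/2) ≤ (1 - y) * ((2:ℝ)^p - 1/2) := by
      apply mul_le_mul_of_nonneg_right h1y; linarith
    nlinarith
  rw [g0, max_eq_left (max_le hB hC)]

lemma gL2 {y : ℝ} (hy0 : 1 - 1 / 2 ^ p ≤ y) (hy1 : y ≤ 1 - 1 / 2 ^ (p+1)) :
    g0 p y = y + 1 / 2 ^ (p+1) := by
  set u : ℝ := 1 / 2 ^ p with hu
  have e1 : (1:ℝ) ≤ 2 ^ p := one_le_two_pow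
  have hu0 : 0 < u := upos
  have hEu : (2:ℝ) ^ p * u = 1 := Eu
  rw [usucc, ← hu] at hy1
  have h1 : u / 2 ≤ 1 - y := by linarith
  have hA : (y + 1) / 2 ≤ y + 1 / 2 ^ (p+1) := by
    rw [usucc, ← hu]; linarith
  have hC : 2 ^ p * (y - 1) + 3 / 2 ≤ y + 1 / 2 ^ (p+1) := by
    rw [usucc, ← hu]
    have key : ((2:ℝ)^p - 1) * (u/2) ≤ ((2:ℝ)^p - 1) * (1 - y) := by
      apply mul_le_mul_of_nonneg_left h1; linarith
    nlinarith
  rw [g0, max_eq_left hC, max_eq_right hA, usucc, ← hu]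

lemma gL3 {y : ℝ} (hy0 : 1 - 1 / 2 ^ (p+1) ≤ y) :
    g0 p y = 2 ^ p * (y - 1) + 3 / 2 := by
  set u : ℝ := 1 / 2 ^ p with hu
  have e1 : (1:ℝ) ≤ 2 ^ p := one_le_two_pow
  have hu0 : 0 < u := upos
  have hEu : (2:ℝ) ^ p * u = 1 := Eu
  rw [usucc, ← hu] at hy0
  have h1 : 1 - y ≤ u / 2 := by linarith
  have hB : y + 1 / 2 ^ (p+1) ≤ 2 ^ p * (y - 1) + 3 / 2 := by
    rw [usucc, ← hu]
    have key : ((2:ℝ)^p - 1) * (1 - y) ≤ ((2:ℝ)^p - 1) * (u/2) := by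
      apply mul_le_mul_of_nonneg_left h1; linarith
    nlinarith
  have hA : (y + 1) / 2 ≤ 2 ^ p * (y - 1) + 3 / 2 := by
    have key : ((2:ℝ)^p - 1/2) * (1 - y) ≤ ((2:ℝ)^p - 1/2) * (u/2) := by
      apply mul_le_mul_of_nonneg_left h1; linarith
    nlinarith
  rw [g0, max_eq_right hB, max_eq_right hA]

lemma g0_lb {y : ℝ} (hy : 0 ≤ y) : 1/2 ≤ g0 p y :=
  le_trans (by linarith) (le_max_left _ _)

lemma g0_lt {y : ℝ} (hy : y < 1) : g0 p y < 3/2 := by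
  set u : ℝ := 1 / 2 ^ p with hu
  have e1 : (1:ℝ) ≤ 2 ^ p := one_le_two_pow
  have hu0 : 0 < u := upos
  have hu1 : u ≤ 1 := ule1
  have hEu : (2:ℝ) ^ p * u = 1 := Eu
  have h3 : 2 ^ p * (y - 1) + 3/2 < 3/2 := by nlinarith [two_pow_pos (p := p)]
  refine max_lt (by linarith) (max_lt ?_ h3)
  rw [usucc, ← hu]; linarith

lemma G_eq {x : ℝ} (h0 : 0 ≤ x) (h1 : x < 1) : G p x = g0 p x := by
  rw [G, Int.fract_eq_self.2 ⟨h0, h1⟩, Int.floor_eq_zero_iff.2 ⟨h0, h1⟩]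
  simp

lemma G_add_int (x : ℝ) (m : ℤ) : G p (x + m) = G p x + m := by
  rw [G, G, Int.fract_add_intCast, Int.floor_add_intCast]; push_cast; ring

lemma G_add_one (x : ℝ) : G p (x + 1) = G p x + 1 := by
  simpa using G_add_int (p := p) x 1

lemma G_strictMono : StrictMono (G p) := by
  intro x y hxy
  have hf : ⌊x⌋ ≤ ⌊y⌋ := Int.floor_le_floor hxy.le
  rcases eq_or_lt_of_le hf with h | h
  · have : Int.fract x < Int.fract y := by
      rw [Int.fract, Int.fract, ← h]; linarith
    have := g0_strictMono (p := p) this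
    rw [G, G, ← h]; linarith
  · have b1 : g0 p (Int.fract x) < 3/2 := g0_lt (Int.fract_lt_one x)
    have b2 : (1:ℝ)/2 ≤ g0 p (Int.fract y) := g0_lb (Int.fract_nonneg y)
    have : (⌊x⌋ : ℝ) + 1 ≤ ⌊y⌋ := by exact_mod_cast Int.add_one_le_iff.2 h
    rw [G, G]; linarith

lemma G_iter_add_int (j : ℕ) (x : ℝ) (m : ℤ) :
    (G p)^[j] (x + m) = (G p)^[j] x + m := by
  induction j generalizing x with
  | zero => simp
  | succ j ih => rw [iterate_succ_apply, iterate_succ_apply, G_add_int, ih]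

lemma iterG {j : ℕ} (hj : j ≤ p) {x : ℝ} (h0 : 0 ≤ x) (h1 : x ≤ 1/2) :
    (G p)^[j] x = 1 - (1 - x) / 2 ^ j := by
  induction j with
  | zero => simp
  | succ j ih =>
    have hj' : j ≤ p := le_trans (Nat.le_succ j) hj
    have e0 : (0:ℝ) < 2 ^ j := by positivity
    have ep : (0:ℝ) < 2 ^ p := two_pow_pos
    rw [iterate_succ_apply', ih hj']
    set z : ℝ := 1 - (1 - x) / 2 ^ j with hz
    have hd : (1 - x) / 2 ^ j ≤ 1 := by
      rw [div_le_one e0]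
      calc 1 - x ≤ 1 := by linarith
      _ ≤ 2 ^ j := one_le_pow₀ (by norm_num)
    have hdpos : 0 < (1 - x) / 2 ^ j := div_pos (by linarith) e0
    have hz0 : 0 ≤ z := by rw [hz]; linarith
    have hzlt : z < 1 := by rw [hz]; linarith
    have hmono : (2:ℝ)^(j+1) ≤ 2 ^ p := pow_le_pow_right₀ (by norm_num) hj
    have hzL1 : z ≤ 1 - 1 / 2 ^ p := by
      have h5 : (1:ℝ) / 2 ^ p ≤ 1 / 2 ^ (j+1) :=
        one_div_le_one_div_of_le (by positivity) hmono
      have h6 : (1:ℝ) / 2 ^ (j+1) ≤ (1 - x) / 2 ^ j := by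
        rw [div_le_div_iff₀ (by positivity) e0, pow_succ]
        nlinarith
      rw [hz]; linarith
    rw [G_eq hz0 hzlt, gL1 hzL1, hz]
    rw [pow_succ]
    field_simp
    ring

lemma step2 {x : ℝ} (h0 : 0 ≤ x) (h1 : x ≤ 1/2) :
    (G p)^[p+1] x = 1 - (1 - 2*x) / 2 ^ (p+1) := by
  have e0 : (0:ℝ) < 2 ^ p := two_pow_pos
  have e1 : (1:ℝ) ≤ 2 ^ p := one_le_two_pow
  rw [iterate_succ_apply', iterG (le_refl p) h0 h1]
  set z : ℝ := 1 - (1 - x) / 2 ^ p with hz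
  have hq : (1:ℝ)/2^p ≤ 1 := ule1
  have hd1 : (1 - x) / 2 ^ p ≤ 1 / 2^p := by gcongr; linarith
  have hd0 : (1:ℝ)/2^(p+1) ≤ (1 - x) / 2 ^ p := by
    calc (1:ℝ)/2^(p+1) = (1/2)/2^p := by rw [pow_succ]; ring
    _ ≤ (1 - x) / 2 ^ p := by gcongr; linarith
  have hdpos : 0 < (1 - x) / 2 ^ p := div_pos (by linarith) e0
  have hz0 : 0 ≤ z := by rw [hz]; linarith
  have hzlt : z < 1 := by rw [hz]; linarith
  rw [G_eq hz0 hzlt, gL2 (by rw [hz]; linarith) (by rw [hz]; linarith [hd0, usucc (p := p)]), hz]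
  rw [usucc, pow_succ]
  field_simp
  ring

lemma step3 {x : ℝ} (h0 : 0 ≤ x) (h1 : x ≤ 1/2) :
    (G p)^[p+2] x = x + 1 := by
  have e0 : (0:ℝ) < 2 ^ p := two_pow_pos
  have e1 : (1:ℝ) ≤ 2 ^ p := one_le_two_pow
  have ep1 : (0:ℝ) < 2 ^ (p+1) := by positivity
  have hs : (p:ℕ) + 2 = (p+1) + 1 := rfl
  rw [hs, iterate_succ_apply', step2 h0 h1]
  rcases eq_or_lt_of_le h1 with h | h
  · -- x = 1/2 : argument is exactly 1
    rw [h]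
    norm_num
    have h1 : (1:ℝ) = 0 + ((1:ℤ):ℝ) := by norm_num
    rw [h1, G_add_int, G_eq le_rfl one_pos, gL1 (by linarith [ule1 (p := p)])]
    norm_num
  · set z : ℝ := 1 - (1 - 2*x) / 2 ^ (p+1) with hz
    have h2x : 0 < 1 - 2*x := by linarith
    have hzlt : z < 1 := by
      have : 0 < (1 - 2*x) / 2 ^ (p+1) := by positivity
      rw [hz]; linarith
    have hdle : (1 - 2*x) / 2 ^ (p+1) ≤ 1 / 2 ^ (p+1) := by
      gcongr
      linarith
    have hz0 : 0 ≤ z := by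
      have hq : (1:ℝ)/2^(p+1) ≤ 1 := by
        rw [div_le_one ep1]; exact one_le_pow₀ (by norm_num)
      rw [hz]; linarith
    rw [G_eq hz0 hzlt, gL3 (by rw [hz]; linarith), hz]
    field_simp
    ring

lemma Qind : ∀ i, i ≤ p → ∀ y, 0 ≤ y → y ≤ 1 - 1 / 2 ^ (i+1) →
    (G p)^[p+2] y = y + 1 := by
  intro i
  induction i with
  | zero =>
    intro _ y h0 h1
    refine step3 h0 ?_
    have : (1:ℝ) - 1/2^(0+1) = 1/2 := by norm_num
    linarith [this ▸ h1]
  | succ i ih =>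
    intro hip y h0 h1
    have hi : i ≤ p := le_trans (Nat.le_succ i) hip
    rcases le_or_gt y (1 - 1 / 2 ^ (i+1)) with h | h
    · exact ih hi y h0 h
    · -- y ∈ (1 - 1/2^(i+1), 1 - 1/2^(i+2)]
      set z : ℝ := 2 * y - 1 with hzdef
      have ei : (0:ℝ) < 2 ^ i := by positivity
      have ei1 : (0:ℝ) < 2 ^ (i+1) := by positivity
      have hz0 : 0 ≤ z := by
        have h2 : (1:ℝ)/2^(i+1) ≤ 1/2 := by
          rw [div_le_div_iff₀ ei1 (by norm_num), pow_succ]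
          nlinarith [one_le_pow₀ (M₀ := ℝ) (n := i) (show (1:ℝ) ≤ 2 by norm_num)]
        rw [hzdef]; linarith
      have hzle : z ≤ 1 - 1 / 2 ^ (i+1) := by
        have : (1:ℝ)/2^(i+2) = (1/2^(i+1))/2 := by
          rw [pow_succ, div_div]
        rw [hzdef]; linarith [this ▸ h1]
      have hzlt : z < 1 := by
        have : (0:ℝ) < 1/2^(i+1) := by positivity
        linarith
      have hGz : G p z = y := by
        have hzL1 : z ≤ 1 - 1 / 2 ^ p := by
          have : (1:ℝ)/2^p ≤ 1/2^(i+1) :=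
            one_div_le_one_div_of_le ei1 (pow_le_pow_right₀ (by norm_num) hip)
          linarith
        rw [G_eq hz0 hzlt, gL1 hzL1, hzdef]; ring
      have hiter := ih hi z hz0 hzle
      calc (G p)^[p+2] y = (G p)^[p+2] (G p z) := by rw [hGz]
      _ = (G p)^[p+2+1] z := by rw [← iterate_succ_apply]
      _ = G p ((G p)^[p+2] z) := by rw [iterate_succ_apply']
      _ = G p (z + 1) := by rw [hiter]
      _ = G p z + 1 := G_add_one z
      _ = y + 1 := by rw [hGz]

lemma full01 {y : ℝ} (h0 : 0 ≤ y) (h1 : y < 1) : (G p)^[p+2] y = y + 1 := by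
  rcases le_or_gt y (1 - 1 / 2 ^ (p+1)) with h | h
  · exact Qind p (le_refl p) y h0 h
  · -- last piece
    set z : ℝ := y - 1 / 2 ^ (p+1) with hzdef
    have ep : (0:ℝ) < 2 ^ p := two_pow_pos
    have ep1 : (0:ℝ) < 2 ^ (p+1) := by positivity
    have hup : (1:ℝ)/2^p ≤ 1 := ule1
    have hus : (1:ℝ)/2^(p+1) = (1/2^p)/2 := usucc
    have hz0 : 0 ≤ z := by
      have : (1:ℝ)/2^(p+1) ≤ 1/2 := by rw [hus]; linarith
      rw [hzdef]; linarith
    have hzle : z ≤ 1 - 1 / 2 ^ (p+1) := by rw [hzdef]; linarith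
    have hzlt : z < 1 := by
      have hx : (0:ℝ) < 1/2^(p+1) := by positivity
      rw [hzdef]; linarith
    have hzge : 1 - 1/2^p ≤ z := by rw [hzdef, hus]; linarith
    have hGz : G p z = y := by
      rw [G_eq hz0 hzlt, gL2 hzge hzle, hzdef]; ring
    have hiter := Qind p (le_refl p) z hz0 hzle
    calc (G p)^[p+2] y = (G p)^[p+2] (G p z) := by rw [hGz]
    _ = G p ((G p)^[p+2] z) := by rw [← iterate_succ_apply, iterate_succ_apply']
    _ = G p (z + 1) := by rw [hiter]
    _ = y + 1 := by rw [G_add_one, hGz]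

lemma Gfull (x : ℝ) : (G p)^[p+2] x = x + 1 := by
  have h := full01 (p := p) (Int.fract_nonneg x) (Int.fract_lt_one x)
  calc (G p)^[p+2] x = (G p)^[p+2] (Int.fract x + (⌊x⌋ : ℤ)) := by
        rw [Int.fract]; push_cast; ring_nf
  _ = (G p)^[p+2] (Int.fract x) + (⌊x⌋ : ℤ) := G_iter_add_int _ _ _
  _ = Int.fract x + 1 + ⌊x⌋ := by rw [h]
  _ = x + 1 := by rw [Int.fract]; push_cast; ring

lemma Gmul (q : ℕ) (x : ℝ) : (G p)^[(p+2) * q] x = x + q := by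
  induction q with
  | zero => simp
  | succ q ih =>
    have h2 : (p+2) * (q+1) = (p+2) + (p+2) * q := by ring
    rw [h2, iterate_add_apply, ih, Gfull]
    push_cast; ring

lemma Gsurj : Function.Surjective (G p) := by
  intro y
  refine ⟨(G p)^[p+1] (y - 1), ?_⟩
  have h : G p ((G p)^[p+1] (y-1)) = (G p)^[p+2] (y - 1) :=
    (iterate_succ_apply' (G p) (p+1) (y-1)).symm
  rw [h, Gfull]; ring

lemma Gcont : Continuous (G p) := by
  have h := (StrictMono.orderIsoOfSurjective (G p) G_strictMono Gsurj).continuous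
  rwa [StrictMono.coe_orderIsoOfSurjective] at h


/-! ### Dyadic numbers -/

lemma dyadic_int (m : ℤ) : IsDyadic (m : ℝ) := ⟨m, 0, by norm_num⟩

lemma dyadic_add {x y : ℝ} (hx : IsDyadic x) (hy : IsDyadic y) : IsDyadic (x + y) := by
  obtain ⟨a, b, rfl⟩ := hx
  obtain ⟨c, d, rfl⟩ := hy
  refine ⟨a * 2 ^ d + c * 2 ^ b, b + d, ?_⟩
  have h1 : ((2:ℝ)) ^ b ≠ 0 := by positivity
  have h2 : ((2:ℝ)) ^ d ≠ 0 := by positivity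
  push_cast
  rw [pow_add, div_add_div _ _ h1 h2]
  ring_nf

lemma dyadic_mul {x y : ℝ} (hx : IsDyadic x) (hy : IsDyadic y) : IsDyadic (x * y) := by
  obtain ⟨a, b, rfl⟩ := hx
  obtain ⟨c, d, rfl⟩ := hy
  refine ⟨a * c, b + d, ?_⟩
  push_cast
  rw [pow_add, div_mul_div_comm]

lemma dyadic_neg {x : ℝ} (hx : IsDyadic x) : IsDyadic (-x) := by
  obtain ⟨a, b, rfl⟩ := hx
  exact ⟨-a, b, by push_cast; ring⟩

lemma dyadic_sub {x y : ℝ} (hx : IsDyadic x) (hy : IsDyadic y) : IsDyadic (x - y) := by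
  rw [sub_eq_add_neg]; exact dyadic_add hx (dyadic_neg hy)

lemma dyadic_inv_pow (b : ℕ) : IsDyadic (1 / 2 ^ b : ℝ) := ⟨1, b, by norm_num⟩

lemma dyadic_one : IsDyadic (1:ℝ) := ⟨1, 0, by norm_num⟩

lemma dyadic_half {x : ℝ} (hx : IsDyadic x) : IsDyadic (x / 2) := by
  obtain ⟨a, b, rfl⟩ := hx
  exact ⟨a, b + 1, by rw [div_div, pow_succ]⟩

lemma dyadic_g0 {y : ℝ} (hy : IsDyadic y) : IsDyadic (g0 p y) := by
  have h1 : IsDyadic ((y + 1) / 2) := dyadic_half (dyadic_add hy dyadic_one)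
  have h2 : IsDyadic (y + 1 / 2 ^ (p+1)) := dyadic_add hy (dyadic_inv_pow (p+1))
  have h3 : IsDyadic (2 ^ p * (y - 1) + 3 / 2) := by
    refine dyadic_add (dyadic_mul ?_ (dyadic_sub hy dyadic_one)) ⟨3, 1, by norm_num⟩
    exact_mod_cast dyadic_int (2 ^ p : ℤ)
  rw [g0]
  rcases le_total ((y + 1) / 2) (max (y + 1 / 2 ^ (p+1)) (2 ^ p * (y - 1) + 3 / 2)) with h | h
  · rw [max_eq_right h]
    rcases le_total (y + 1 / 2 ^ (p+1)) (2 ^ p * (y - 1) + 3 / 2) with h' | h'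
    · rwa [max_eq_right h']
    · rwa [max_eq_left h']
  · rwa [max_eq_left h]

lemma dyadic_G {x : ℝ} (hx : IsDyadic x) : IsDyadic (G p x) := by
  rw [G]
  refine dyadic_add (dyadic_g0 ?_) (dyadic_int _)
  rw [Int.fract]
  exact dyadic_sub hx (dyadic_int _)

/-! ### The circle homeomorphism -/

lemma coe_eq_coe {x y : ℝ} :
    (x : AddCircle (1:ℝ)) = (y : AddCircle (1:ℝ)) ↔ ∃ m : ℤ, y = x + m := by
  rw [QuotientAddGroup.eq]
  constructor
  · intro h
    rw [AddSubgroup.mem_zmultiples_iff] at h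
    obtain ⟨k, hk⟩ := h
    refine ⟨k, ?_⟩
    have : (k:ℝ) = -x + y := by rw [← hk]; simp
    linarith
  · rintro ⟨m, rfl⟩
    rw [AddSubgroup.mem_zmultiples_iff]
    exact ⟨m, by simp⟩

/-- Descend an integer-equivariant map of `ℝ` to the circle. -/
noncomputable def cLift (f : ℝ → ℝ) (hf : ∀ (x : ℝ) (m : ℤ), f (x + m) = f x + m) :
    AddCircle (1:ℝ) → AddCircle (1:ℝ) :=
  Quotient.map' f (by
    intro a b hab
    rw [QuotientAddGroup.leftRel_apply, AddSubgroup.mem_zmultiples_iff] at hab ⊢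
    obtain ⟨k, hk⟩ := hab
    refine ⟨k, ?_⟩
    have hba : b = a + k := by
      have : (k:ℝ) = -a + b := by rw [← hk]; simp
      linarith
    rw [hba, hf]
    simp)

lemma cLift_coe (f : ℝ → ℝ) (hf : ∀ (x : ℝ) (m : ℤ), f (x + m) = f x + m) (x : ℝ) :
    cLift f hf (x : AddCircle (1:ℝ)) = ((f x : ℝ) : AddCircle (1:ℝ)) := rfl

lemma cLift_cont (f : ℝ → ℝ) (hf : ∀ (x : ℝ) (m : ℤ), f (x + m) = f x + m)
    (hc : Continuous f) : Continuous (cLift f hf) :=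
  Continuous.quotient_map' hc _

noncomputable def Ginv (p : ℕ) : ℝ → ℝ := fun y => (G p)^[p+1] (y - 1)

lemma Ginv_add_int (x : ℝ) (m : ℤ) : Ginv p (x + m) = Ginv p x + m := by
  rw [Ginv, Ginv, show x + (m:ℝ) - 1 = (x - 1) + m by ring, G_iter_add_int]

lemma GinvG (x : ℝ) : Ginv p (G p x) = x := by
  rw [Ginv, show G p x - 1 = G p x + ((-1 : ℤ):ℝ) by push_cast; ring, G_iter_add_int,
    ← iterate_succ_apply, Gfull]
  push_cast; ring

lemma GGinv (y : ℝ) : G p (Ginv p y) = y := by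
  have h : G p ((G p)^[p+1] (y - 1)) = (G p)^[p+2] (y-1) :=
    (iterate_succ_apply' (G p) (p+1) (y-1)).symm
  rw [Ginv, h, Gfull]; ring

lemma Ginv_cont : Continuous (Ginv p) :=
  ((Gcont (p := p)).iterate (p+1)).comp (continuous_id.sub continuous_const)

/-- the order-`p+2` element of Thompson's group `T` -/
noncomputable def cT (p : ℕ) : AddCircle (1:ℝ) ≃ₜ AddCircle (1:ℝ) :=
{ toFun := cLift (G p) G_add_int
  invFun := cLift (Ginv p) Ginv_add_int
  left_inv := by
    intro q
    induction q using QuotientAddGroup.induction_on with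
    | H z =>
      show cLift (Ginv p) Ginv_add_int (cLift (G p) G_add_int z) = (z : AddCircle (1:ℝ))
      rw [cLift_coe, cLift_coe, GinvG]
  right_inv := by
    intro q
    induction q using QuotientAddGroup.induction_on with
    | H z =>
      show cLift (G p) G_add_int (cLift (Ginv p) Ginv_add_int z) = (z : AddCircle (1:ℝ))
      rw [cLift_coe, cLift_coe, GGinv]
  continuous_toFun := cLift_cont (G p) G_add_int Gcont
  continuous_invFun := cLift_cont (Ginv p) Ginv_add_int Ginv_cont }

lemma cT_coe (x : ℝ) : cT p (x : AddCircle (1:ℝ)) = ((G p x : ℝ) : AddCircle (1:ℝ)) := by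
  unfold cT
  rfl

lemma homeo_mul_apply (f g : AddCircle (1:ℝ) ≃ₜ AddCircle (1:ℝ)) (q : AddCircle (1:ℝ)) :
    (f * g) q = f (g q) := rfl

lemma homeo_one_apply (q : AddCircle (1:ℝ)) :
    (1 : AddCircle (1:ℝ) ≃ₜ AddCircle (1:ℝ)) q = q := rfl

lemma cT_pow (k : ℕ) (x : ℝ) :
    ((cT p) ^ k) (x : AddCircle (1:ℝ)) = (((G p)^[k] x : ℝ) : AddCircle (1:ℝ)) := by
  induction k generalizing x with
  | zero => rw [pow_zero]; rfl
  | succ k ih =>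
    rw [pow_succ, homeo_mul_apply, cT_coe, ih, iterate_succ_apply]

lemma G_iter_zero {m : ℕ} (hm : m ≤ p+1) : (G p)^[m] 0 = 1 - 1/2^m := by
  rcases Nat.lt_or_ge m (p+1) with h | h
  · have := iterG (p := p) (Nat.lt_succ_iff.1 h) (le_refl (0:ℝ)) (by norm_num)
    simpa using this
  · have hm' : m = p + 1 := le_antisymm hm h
    subst hm'
    have := step2 (p := p) (le_refl (0:ℝ)) (by norm_num)
    simpa using this

lemma cT_order_pow : (cT p) ^ (p+2) = 1 := by
  apply Homeomorph.ext
  intro q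
  induction q using QuotientAddGroup.induction_on with
  | H z =>
    rw [cT_pow, Gfull, homeo_one_apply]
    exact coe_eq_coe.2 ⟨-1, by push_cast; ring⟩


lemma G_one : G p 1 = 3/2 := by
  have h1 : G p ((0:ℝ) + ((1:ℤ):ℝ)) = G p 0 + ((1:ℤ):ℝ) := G_add_int 0 1
  have h0 : G p 0 = 1/2 := by
    rw [G_eq le_rfl one_pos, gL1 (by linarith [ule1 (p := p)])]
    norm_num
  have : G p 1 = G p 0 + 1 := by
    have e : (0:ℝ) + ((1:ℤ):ℝ) = 1 := by push_cast; ring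
    rw [← e, h1]; push_cast; ring
  rw [this, h0]; norm_num

noncomputable def Glift (p : ℕ) : CircleDeg1Lift :=
  ⟨⟨G p, (G_strictMono (p := p)).monotone⟩, G_add_one⟩

lemma Glift_coe : ⇑(Glift p) = G p := rfl
end TT




open TT in
/-- For every positive integer `n` there is an element `c` of Thompson's group `T` of
order exactly `n` such that for every `1 ≤ k < n` the rotation number of `c ^ k` equals
`k / n` modulo 1: every lift of `c ^ k` has translation number `k / n + m` for some
integer `m` (and `c ^ k` does admit a lift). -/
theorem thompsonT_torsion_rotation_number :
    ∀ n : ℕ, 0 < n →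
      ∃ c : AddCircle (1:ℝ) ≃ₜ AddCircle (1:ℝ), InThompsonT c ∧ orderOf c = n ∧
        ∀ k : ℕ, 1 ≤ k → k < n →
          (∃ F : CircleDeg1Lift,
            ∀ x : ℝ, (c ^ k) (x : AddCircle (1:ℝ)) = ((F x : ℝ) : AddCircle (1:ℝ))) ∧
          ∀ F : CircleDeg1Lift,
            (∀ x : ℝ, (c ^ k) (x : AddCircle (1:ℝ)) = ((F x : ℝ) : AddCircle (1:ℝ))) →
            ∃ m : ℤ, F.translationNumber = (k : ℝ) / (n : ℝ) + m := by
  intro n hn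
  obtain _ | _ | p := n
  · omega
  · -- n = 1 : the identity
    refine ⟨1, ⟨fun x => Iff.rfl, id, strictMono_id, ⟨fun _ => rfl, fun _ => rfl⟩,
        1, ![0, 1], ?_, ?_, ?_, ?_, ?_⟩, orderOf_one, ?_⟩
    · intro i j hij
      fin_cases i <;> fin_cases j <;> simp_all <;> norm_num
    · norm_num
    · norm_num [Fin.last]
    · intro i
      fin_cases i
      · exact ⟨⟨0, 0, by norm_num⟩, ⟨0, 0, by norm_num⟩⟩
      · exact ⟨⟨1, 0, by norm_num⟩, ⟨1, 0, by norm_num⟩⟩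
    · intro i
      refine ⟨0, 0, fun x _ => ?_⟩
      norm_num
    · intro k hk1 hk2
      omega
  · -- n = p + 2
    have fwd : ∀ q, IsDyadicPt q → IsDyadicPt (cT p q) := by
      rintro q ⟨r, hr, rfl⟩
      exact ⟨G p r, dyadic_G hr, (cT_coe r).symm⟩
    have powd : ∀ (m : ℕ) (q), IsDyadicPt q → IsDyadicPt ((cT p ^ m) q) := by
      intro m
      induction m with
      | zero => intro q h; rw [pow_zero]; exact h
      | succ m ih => intro q h; rw [pow_succ, homeo_mul_apply]; exact ih _ (fwd _ h)
    refine ⟨cT p, ⟨?_, G p, G_strictMono, ⟨G_add_one, fun x => cT_coe x⟩, p+2,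
        (fun i : Fin (p+3) => if (i:ℕ) = p+2 then (1:ℝ) else 1 - 1/2^(i:ℕ)),
        ?_, ?_, ?_, ?_, ?_⟩, ?_, ?_⟩
    · -- dyadic points preserved
      intro x
      refine ⟨fwd x, fun h => ?_⟩
      have h2 : cT p ^ (p+1) * cT p = 1 := by
        rw [← pow_succ]; exact cT_order_pow
      have hb : (cT p ^ (p+1)) (cT p x) = x := by
        calc (cT p ^ (p+1)) (cT p x) = (cT p ^ (p+1) * cT p) x := rfl
        _ = x := by rw [h2]; rfl
      rw [← hb]
      exact powd _ _ h
    · -- strict mono of partition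
      intro i j hij
      simp only []
      have hij' : (i:ℕ) < (j:ℕ) := hij
      have hjle : (j:ℕ) ≤ p+2 := Nat.lt_succ_iff.1 j.isLt
      by_cases hj : (j:ℕ) = p+2
      · rw [if_pos hj, if_neg (by omega)]
        have : (0:ℝ) < 1/2^(i:ℕ) := by positivity
        have h1 : (1:ℝ)/2^(i:ℕ) ≤ 1 := by
          rw [div_le_one (by positivity)]; exact one_le_pow₀ (by norm_num)
        linarith
      · rw [if_neg (by omega : ¬(i:ℕ) = p+2), if_neg hj]
        have h2 : (1:ℝ)/2^(j:ℕ) < 1/2^(i:ℕ) := by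
          apply one_div_lt_one_div_of_lt (by positivity)
          exact pow_lt_pow_right₀ (by norm_num) hij'
        linarith
    · -- t 0 = 0
      beta_reduce
      rw [if_neg (by rw [Fin.val_zero]; omega)]
      norm_num
    · -- t last = 1
      simp
    · -- dyadic breakpoints
      intro i
      have h1 : IsDyadic (if (i:ℕ) = p+2 then (1:ℝ) else 1 - 1/2^(i:ℕ)) := by
        by_cases h : (i:ℕ) = p+2
        · rw [if_pos h]; exact dyadic_one
        · rw [if_neg h]; exact dyadic_sub dyadic_one (dyadic_inv_pow _)
      exact ⟨h1, dyadic_G h1⟩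

    · -- affine pieces
      intro i
      have hiv : (i:ℕ) < p+2 := i.isLt
      have hcs : ((i.castSucc : Fin (p+3)) : ℕ) = (i:ℕ) := rfl
      have hsc : ((i.succ : Fin (p+3)) : ℕ) = (i:ℕ)+1 := rfl
      have hle1 : (1:ℝ)/2^(i:ℕ) ≤ 1 := by
        rw [div_le_one (by positivity)]; exact one_le_pow₀ (by norm_num)
      rcases lt_trichotomy ((i:ℕ)+1) (p+1) with hlt | heq | hgt
      · -- slope 1/2 piece
        refine ⟨-1, 1/2, fun x hx => ?_⟩
        simp only [] at hx
        rw [hcs, if_neg (by omega), hsc, if_neg (by omega)] at hx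
        obtain ⟨hxl, hxr⟩ := hx
        have hx0 : 0 ≤ x := by linarith
        have hpos : (0:ℝ) < 1/2^((i:ℕ)+1) := by positivity
        have hx1 : x < 1 := by linarith
        have hxp : x ≤ 1 - 1/2^p := by
          have : (1:ℝ)/2^p ≤ 1/2^((i:ℕ)+1) :=
            one_div_le_one_div_of_le (by positivity)
              (pow_le_pow_right₀ (by norm_num) (by omega))
          linarith
        rw [G_eq hx0 hx1, gL1 hxp, zpow_neg_one]
        ring
      · -- slope 1 piece
        have hip : (i:ℕ) = p := by omega
        refine ⟨0, 1/2^(p+1), fun x hx => ?_⟩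
        simp only [] at hx
        rw [hcs, if_neg (by omega), hsc, if_neg (by omega), hip] at hx
        obtain ⟨hxl, hxr⟩ := hx
        have hx0 : 0 ≤ x := by linarith [ule1 (p := p)]
        have hpos : (0:ℝ) < 1/2^(p+1) := by positivity
        have hx1 : x < 1 := by linarith
        rw [G_eq hx0 hx1, gL2 hxl hxr, zpow_zero]
        ring
      · -- slope 2^p piece
        have hip : (i:ℕ) = p+1 := by omega
        refine ⟨(p:ℤ), 3/2 - 2^p, fun x hx => ?_⟩
        simp only [] at hx
        rw [hcs, if_neg (by omega), hsc, hip, if_pos rfl] at hx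
        obtain ⟨hxl, hxr⟩ := hx
        have hpos : (0:ℝ) < 1/2^(p+1) := by positivity
        have hx0 : 0 ≤ x := by
          have : (1:ℝ)/2^(p+1) ≤ 1 := by
            rw [div_le_one (by positivity)]; exact one_le_pow₀ (by norm_num)
          linarith
        rcases lt_or_eq_of_le hxr with hlt1 | heq1
        · rw [G_eq hx0 hlt1, gL3 hxl, zpow_natCast]
          ring
        · rw [heq1, G_one, zpow_natCast]
          ring
    · -- order
      rw [orderOf_eq_iff (by omega)]
      refine ⟨cT_order_pow, ?_⟩
      intro m hm hm0 hEq
      have h0 : ((cT p) ^ m) ((0:ℝ) : AddCircle (1:ℝ)) = ((0:ℝ) : AddCircle (1:ℝ)) := by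
        rw [hEq]; rfl
      rw [cT_pow, G_iter_zero (by omega)] at h0
      obtain ⟨mm, hmm⟩ := coe_eq_coe.1 h0
      have hum : (0:ℝ) < 1/2^m := by positivity
      have hum2 : (1:ℝ)/2^m ≤ 1/2 := by
        apply one_div_le_one_div_of_le (by norm_num)
        calc (2:ℝ) = 2^1 := (pow_one 2).symm
        _ ≤ 2^m := pow_le_pow_right₀ (by norm_num) hm0
      have l1 : (mm:ℝ) < 0 := by linarith
      have l2 : (-1:ℝ) < mm := by linarith
      have i1 : mm < 0 := by exact_mod_cast l1
      have i2 : (-1:ℤ) < mm := by exact_mod_cast l2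
      omega
    · -- rotation numbers
      intro k hk1 hkn
      constructor
      · refine ⟨Glift p ^ k, fun x => ?_⟩
        have hh : (Glift p ^ k) x = (G p)^[k] x := by
          rw [CircleDeg1Lift.coe_pow]; rfl
        rw [cT_pow, hh]
      · intro F hF
        have hπ : ∀ x : ℝ, ∃ m : ℤ, F x = (G p)^[k] x + m := by
          intro x
          exact coe_eq_coe.1 ((cT_pow k x).symm.trans (hF x))
        choose j hj using hπ
        set H : ℝ → ℝ := (G p)^[k] with hH
        have hHmono : StrictMono H := G_strictMono.iterate k
        have key : ∀ a b : ℝ, j b ≤ j a := by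
          intro a b
          set M : ℤ := ⌈b - a⌉ with hM
          have h1 : b - (M:ℝ) ≤ a := by linarith [Int.le_ceil (b - a)]
          have h2 : a < b - (M:ℝ) + 1 := by linarith [Int.ceil_lt_add_one (b - a)]
          have e1 : F (b - (M:ℝ)) ≤ F a := F.mono h1
          have e2 : F (b - (M:ℝ)) = F b - M := by
            rw [sub_eq_add_neg, ← Int.cast_neg, F.map_add_int, Int.cast_neg, sub_eq_add_neg]
          have e3 : H a < H b - M + 1 := by
            have h4 : H (b - (M:ℝ) + 1) = H b - M + 1 := by
              rw [show b - (M:ℝ) + 1 = b + ((1 - M : ℤ):ℝ) by push_cast; ring, hH,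
                G_iter_add_int]
              push_cast; ring
            calc H a < H (b - (M:ℝ) + 1) := hHmono h2
            _ = H b - M + 1 := h4
          have hfa := hj a
          have hfb := hj b
          have hcast : (j b : ℝ) < (j a : ℝ) + 1 := by linarith
          have hfin : j b < j a + 1 := by exact_mod_cast hcast
          omega
        have hconst : ∀ x : ℝ, F x = H x + (j 0 : ℝ) := by
          intro x
          have h5 : j x = j 0 := le_antisymm (key 0 x) (key x 0)
          rw [hj x, h5]
        have Fiter : ∀ (q : ℕ) (x : ℝ), F^[q] x = H^[q] x + ((q * (j 0) : ℤ) : ℝ) := by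
          intro q
          induction q with
          | zero => intro x; simp
          | succ q ih =>
            intro x
            rw [iterate_succ_apply', iterate_succ_apply', ih x, F.map_add_int, hconst]
            push_cast; ring
        have hH0 : H^[p+2] (0:ℝ) = (0:ℝ) + ((k : ℤ) : ℝ) := by
          rw [hH, ← Function.iterate_mul, show k * (p+2) = (p+2) * k by ring, Gmul]
          push_cast; ring
        have hc : (F ^ (p+2)) (0:ℝ) = F^[p+2] (0:ℝ) := by
          rw [CircleDeg1Lift.coe_pow]
        have hFP : (F ^ (p+2)) (0:ℝ) = (0:ℝ) + (((k:ℤ) + (p+2) * j 0 : ℤ) : ℝ) := by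
          rw [hc, Fiter, hH0]
          push_cast; ring
        have hτ := (F ^ (p+2)).translationNumber_of_eq_add_int hFP
        rw [CircleDeg1Lift.translationNumber_pow] at hτ
        refine ⟨j 0, ?_⟩
        have hne : ((p:ℝ) + 2) ≠ 0 := by positivity
        push_cast at hτ ⊢
        field_simp at hτ ⊢
        linarith
end
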